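/- For commuting density operators A, B (simultaneously diagonalizable with strictly positive eigenvalues), define V_s = A^{1−s}B^s / Tr(A^{1−s}B^s) for s ∈ (0,1) and μ(s) = log Tr(A^{1−s}B^s). Then μ'(s) computed by differentiating satisfies: −μ(s) + s·μ'(s) = D(V_s‖A) and −μ(s) − (1−s)·μ'(s) = D(V_s‖B), where D(P‖Q) = Tr P(log P − log Q) is the Kullback-Leibler divergence. -/

import Mathlib

set_option maxHeartbeats 1000000

open Matrix
open scoped ComplexOrder

noncomputable def mpow {d : ℕ} (A : Matrix (Fin d) (Fin d) ℂ) (t : ℝ) : Matrix (Fin d) (Fin d) ℂ :=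
  cfc (fun x : ℝ => x ^ t) A

noncomputable def mlog {d : ℕ} (A : Matrix (Fin d) (Fin d) ℂ) : Matrix (Fin d) (Fin d) ℂ :=
  cfc (fun x : ℝ => Real.log x) A

noncomputable def IsDensity {d : ℕ} (A : Matrix (Fin d) (Fin d) ℂ) : Prop :=
  A.PosSemidef ∧ A.trace = 1

/-- Quantum relative entropy `D(P‖Q) = Tr P(log P − log Q)`. -/
noncomputable def relEnt {d : ℕ} (P Q : Matrix (Fin d) (Fin d) ℂ) : ℝ :=
  (P * (mlog P - mlog Q)).trace.re

section Aux

open Polynomial Module.End Submodule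

variable {d : ℕ}

noncomputable def conjAlgHom (U : Matrix (Fin d) (Fin d) ℂ) (hU : Uᴴ * U = 1) :
    Matrix (Fin d) (Fin d) ℂ →ₐ[ℝ] Matrix (Fin d) (Fin d) ℂ where
  toFun X := U * X * Uᴴ
  map_one' := by
    show U * 1 * Uᴴ = 1
    rw [mul_one, mul_eq_one_comm.mp hU]
  map_mul' X Y := by
    show U * (X * Y) * Uᴴ = (U * X * Uᴴ) * (U * Y * Uᴴ)
    calc U * (X * Y) * Uᴴ = U * X * (Uᴴ * U) * Y * Uᴴ := by rw [hU]; noncomm_ring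
      _ = (U * X * Uᴴ) * (U * Y * Uᴴ) := by noncomm_ring
  map_zero' := by show U * 0 * Uᴴ = 0; simp
  map_add' X Y := by show U * (X + Y) * Uᴴ = U * X * Uᴴ + U * Y * Uᴴ; noncomm_ring
  commutes' r := by
    show U * algebraMap ℝ _ r * Uᴴ = algebraMap ℝ _ r
    simp [Algebra.algebraMap_eq_smul_one, Matrix.mul_smul, Matrix.smul_mul,
      mul_eq_one_comm.mp hU]

@[simp] lemma conjAlgHom_apply (U : Matrix (Fin d) (Fin d) ℂ) (hU : Uᴴ * U = 1)
    (X : Matrix (Fin d) (Fin d) ℂ) : conjAlgHom U hU X = U * X * Uᴴ := rfl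

lemma diag_real_conjTranspose (a : Fin d → ℝ) :
    (Matrix.diagonal (fun i => (a i : ℂ)))ᴴ = Matrix.diagonal (fun i => (a i : ℂ)) := by
  rw [diagonal_conjTranspose]
  ext i j
  simp [Matrix.diagonal_apply, Pi.star_apply, Complex.star_def, Complex.conj_ofReal]

lemma cfc_conj_diag (U : Matrix (Fin d) (Fin d) ℂ) (hU : Uᴴ * U = 1)
    (a : Fin d → ℝ) (f : ℝ → ℝ) :
    cfc f (U * Matrix.diagonal (fun i => (a i : ℂ)) * Uᴴ)
      = U * Matrix.diagonal (fun i => (f (a i) : ℂ)) * Uᴴ := by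
  classical
  set φ := conjAlgHom U hU with hφ
  set D : Matrix (Fin d) (Fin d) ℂ := Matrix.diagonal (fun i => (a i : ℂ)) with hD
  set M := U * D * Uᴴ with hM
  have hMφ : M = φ D := rfl
  have hsa : IsSelfAdjoint M := by
    have h : Mᴴ = M := by
      rw [hM, conjTranspose_mul, conjTranspose_mul, conjTranspose_conjTranspose, hD,
        diag_real_conjTranspose, ← hD, ← Matrix.mul_assoc]
    exact h
  have hspec : spectrum ℝ M ⊆ Set.range a := by
    intro x hx
    by_contra hxr
    apply spectrum.notMem_iff.mpr ?_ hx
    have hne : ∀ i, (x : ℂ) - (a i : ℂ) ≠ 0 := fun i h =>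
      hxr ⟨i, by exact_mod_cast (sub_eq_zero.mp h).symm⟩
    have key : algebraMap ℝ (Matrix (Fin d) (Fin d) ℂ) x - M
        = φ (Matrix.diagonal (fun i => (x : ℂ) - a i)) := by
      rw [hMφ, ← φ.commutes x, ← map_sub]
      congr 1
      rw [hD, Matrix.algebraMap_eq_diagonal, diagonal_sub]
      congr 1
    rw [key]
    refine IsUnit.map φ ?_
    rw [Matrix.isUnit_iff_isUnit_det, det_diagonal]
    exact isUnit_iff_ne_zero.mpr (Finset.prod_ne_zero_iff.mpr fun i _ => hne i)
  set s : Finset ℝ := Finset.univ.image a with hs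
  set p : ℝ[X] := Lagrange.interpolate s id f with hp
  have hpeval : ∀ i, p.eval (a i) = f (a i) := by
    intro i
    have := Lagrange.eval_interpolate_at_node (v := id) (r := f)
      (Set.injOn_id _) (Finset.mem_image_of_mem a (Finset.mem_univ i))
    exact this
  have h1 : cfc f M = cfc p.eval M := by
    apply cfc_congr
    intro x hx
    obtain ⟨i, rfl⟩ := hspec hx
    exact (hpeval i).symm
  have h2 : aeval D p = Matrix.diagonal (aeval (fun i => (a i : ℂ)) p) :=
    Polynomial.aeval_algHom_apply (Matrix.diagonalAlgHom ℝ) _ p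
  have h5 : (aeval (fun i => (a i : ℂ)) p) = fun i => (f (a i) : ℂ) := by
    funext i
    have h3 : (aeval (fun i => (a i : ℂ)) p) i = aeval ((a i : ℂ)) p :=
      (Polynomial.aeval_algHom_apply (Pi.evalAlgHom ℝ (fun _ => ℂ) i) _ p).symm
    have h4 : aeval ((a i : ℂ)) p = ((p.eval (a i) : ℝ) : ℂ) :=
      Polynomial.aeval_algebraMap_apply_eq_algebraMap_eval (a i) p
    rw [h3, h4, hpeval i]
  rw [h1, cfc_polynomial p M hsa, hMφ, Polynomial.aeval_algHom_apply, h2, h5, conjAlgHom_apply]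

lemma joint_diag (A B : Matrix (Fin d) (Fin d) ℂ)
    (hAh : A.IsHermitian) (hBh : B.IsHermitian) (hcomm : A * B = B * A) :
    ∃ (U : Matrix (Fin d) (Fin d) ℂ) (α β : Fin d → ℂ),
      Uᴴ * U = 1 ∧
      (∀ i, A.mulVec (fun k => U k i) = fun k => α i * U k i) ∧
      (∀ i, B.mulVec (fun k => U k i) = fun k => β i * U k i) := by
  classical
  set T₁ : EuclideanSpace ℂ (Fin d) →ₗ[ℂ] EuclideanSpace ℂ (Fin d) := Matrix.toEuclideanLin A with hT₁def
  set T₂ : EuclideanSpace ℂ (Fin d) →ₗ[ℂ] EuclideanSpace ℂ (Fin d) := Matrix.toEuclideanLin B with hT₂def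
  have hT₁ : T₁.IsSymmetric := Matrix.isHermitian_iff_isSymmetric.mp hAh
  have hT₂ : T₂.IsSymmetric := Matrix.isHermitian_iff_isSymmetric.mp hBh
  have hc : Commute T₁ T₂ := by
    unfold Commute SemiconjBy
    have h1 : T₁ * T₂ = Matrix.toEuclideanLin (A * B) := by
      rw [hT₁def, hT₂def, Matrix.toEuclideanLin_eq_toLin,
        Matrix.toLin_mul (PiLp.basisFun 2 ℂ (Fin d)) (PiLp.basisFun 2 ℂ (Fin d))
          (PiLp.basisFun 2 ℂ (Fin d))]
      rfl
    have h2 : T₂ * T₁ = Matrix.toEuclideanLin (B * A) := by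
      rw [hT₁def, hT₂def, Matrix.toEuclideanLin_eq_toLin,
        Matrix.toLin_mul (PiLp.basisFun 2 ℂ (Fin d)) (PiLp.basisFun 2 ℂ (Fin d))
          (PiLp.basisFun 2 ℂ (Fin d))]
      rfl
    rw [h1, h2, hcomm]
  have hInt := LinearMap.IsSymmetric.directSum_isInternal_of_commute hT₁ hT₂ hc
  have hOrth := LinearMap.IsSymmetric.orthogonalFamily_eigenspace_inf_eigenspace hT₁ hT₂
  set V : ℂ × ℂ → Submodule ℂ (EuclideanSpace ℂ (Fin d)) :=
    fun p => eigenspace T₁ p.2 ⊓ eigenspace T₂ p.1 with hV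
  have hindep : iSupIndep V := hInt.submodule_iSupIndep
  letI : Fintype {p : ℂ × ℂ // V p ≠ ⊥} := hindep.fintypeNeBotOfFiniteDimensional
  have hOrth' := hOrth.comp (f := (Subtype.val : {p : ℂ × ℂ // V p ≠ ⊥} → ℂ × ℂ))
    Subtype.coe_injective
  set V' : {p : ℂ × ℂ // V p ≠ ⊥} → Submodule ℂ (EuclideanSpace ℂ (Fin d)) :=
    fun p => V p.1 with hV'
  have hsup : ⨆ p, V' p = ⊤ := by
    rw [← hInt.submodule_iSup_eq_top]
    apply le_antisymm
    · exact iSup_le fun p => le_iSup V p.1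
    · refine iSup_le fun p => ?_
      by_cases h : V p = ⊥
      · rw [h]; exact bot_le
      · exact le_iSup V' ⟨p, h⟩
  have hInt' : DirectSum.IsInternal V' := by
    apply hOrth'.isInternal_iff.mpr
    rw [hsup, Submodule.top_orthogonal_eq_bot]
  have hn : Module.finrank ℂ (EuclideanSpace ℂ (Fin d)) = d := finrank_euclideanSpace_fin
  set b := hInt'.subordinateOrthonormalBasis hn hOrth' with hb
  set idx : Fin d → {p : ℂ × ℂ // V p ≠ ⊥} :=
    fun i => hInt'.subordinateOrthonormalBasisIndex hn i hOrth' with hidx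
  have hmem : ∀ i, b i ∈ V (idx i).1 :=
    fun i => hInt'.subordinateOrthonormalBasis_subordinate hn i hOrth'
  refine ⟨Matrix.of (fun k i => b i k), fun i => ((idx i : ℂ × ℂ)).2,
    fun i => ((idx i : ℂ × ℂ)).1, ?_, ?_, ?_⟩
  · ext i j
    simp only [Matrix.mul_apply, Matrix.conjTranspose_apply, Matrix.of_apply, Matrix.one_apply]
    have := orthonormal_iff_ite.mp b.orthonormal i j
    rw [← this]
    simp [PiLp.inner_apply, Matrix.star_apply, mul_comm]
  · intro i
    have h1 : T₁ (b i) = ((idx i : ℂ × ℂ)).2 • b i := (mem_eigenspace_iff).mp (hmem i).1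
    have h2 : A.mulVec (b i) = ((idx i : ℂ × ℂ)).2 • (b i : EuclideanSpace ℂ (Fin d)) := congrArg WithLp.ofLp h1
    funext k
    have := congrFun h2 k
    simpa [Matrix.of_apply] using this
  · intro i
    have h1 : T₂ (b i) = ((idx i : ℂ × ℂ)).1 • b i := (mem_eigenspace_iff).mp (hmem i).2
    have h2 : B.mulVec (b i) = ((idx i : ℂ × ℂ)).1 • (b i : EuclideanSpace ℂ (Fin d)) := congrArg WithLp.ofLp h1
    funext k
    have := congrFun h2 k
    simpa [Matrix.of_apply] using this

lemma posdef_joint_diag (A B : Matrix (Fin d) (Fin d) ℂ)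
    (hApd : A.PosDef) (hBpd : B.PosDef) (hcomm : A * B = B * A) :
    ∃ (U : Matrix (Fin d) (Fin d) ℂ) (a b : Fin d → ℝ),
      Uᴴ * U = 1 ∧ (∀ i, 0 < a i) ∧ (∀ i, 0 < b i) ∧
      A = U * Matrix.diagonal (fun i => (a i : ℂ)) * Uᴴ ∧
      B = U * Matrix.diagonal (fun i => (b i : ℂ)) * Uᴴ := by
  classical
  obtain ⟨U, α, β, hU, heigA, heigB⟩ := joint_diag A B hApd.1 hBpd.1 hcomm
  have hU2 : U * Uᴴ = 1 := mul_eq_one_comm.mp hU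
  have hcol : ∀ i, (fun k => U k i) ≠ (0 : Fin d → ℂ) := by
    intro i h
    have h1 : (Uᴴ * U) i i = 1 := by rw [hU]; simp
    rw [Matrix.mul_apply] at h1
    simp only [Matrix.conjTranspose_apply] at h1
    have : ∀ k, U k i = 0 := fun k => congrFun h k
    simp [this] at h1
  have hdot : ∀ i, star (fun k => U k i) ⬝ᵥ ((fun k => U k i) : Fin d → ℂ) = 1 := by
    intro i
    have h1 : (Uᴴ * U) i i = 1 := by rw [hU]; simp
    rw [Matrix.mul_apply] at h1
    simpa [Matrix.conjTranspose_apply, dotProduct, Pi.star_apply] using h1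
  have keyA : ∀ (M : Matrix (Fin d) (Fin d) ℂ) (γ : Fin d → ℂ),
      (∀ i, M.mulVec (fun k => U k i) = fun k => γ i * U k i) → M.PosDef →
      ∀ i, 0 < γ i := by
    intro M γ heig hM i
    have hp := (posDef_iff_dotProduct_mulVec.mp hM).2 (x := fun k => U k i) (hcol i)
    rw [heig i] at hp
    have : star (fun k => U k i) ⬝ᵥ (fun k => γ i * U k i) = γ i := by
      have : (fun k => γ i * U k i) = γ i • (fun k => U k i) := by
        funext k; simp [Pi.smul_apply, smul_eq_mul]
      rw [this, dotProduct_smul, hdot i, smul_eq_mul, mul_one]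
    rwa [this] at hp
  have hαpos := keyA A α heigA hApd
  have hβpos := keyA B β heigB hBpd
  have hconj : ∀ (M : Matrix (Fin d) (Fin d) ℂ) (γ : Fin d → ℂ),
      (∀ i, M.mulVec (fun k => U k i) = fun k => γ i * U k i) →
      M = U * Matrix.diagonal γ * Uᴴ := by
    intro M γ heig
    have h1 : M * U = U * Matrix.diagonal γ := by
      ext k i
      have := congrFun (heig i) k
      rw [Matrix.mulVec, dotProduct] at this
      rw [Matrix.mul_apply, Matrix.mul_diagonal]
      rw [this]; ring
    calc M = M * (U * Uᴴ) := by rw [hU2, mul_one]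
      _ = (M * U) * Uᴴ := by rw [Matrix.mul_assoc]
      _ = U * Matrix.diagonal γ * Uᴴ := by rw [h1]
  refine ⟨U, fun i => (α i).re, fun i => (β i).re, hU, fun i => ?_, fun i => ?_, ?_, ?_⟩
  · exact (Complex.lt_def.mp (hαpos i)).1
  · exact (Complex.lt_def.mp (hβpos i)).1
  · have hre : α = fun i => (((α i).re : ℝ) : ℂ) := by
      funext i
      refine (Complex.ext ?_ ?_)
      · simp
      · simpa using ((Complex.lt_def.mp (hαpos i)).2).symm
    rw [hconj A α heigA, hre]
    simp
  · have hre : β = fun i => (((β i).re : ℝ) : ℂ) := by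
      funext i
      refine (Complex.ext ?_ ?_)
      · simp
      · simpa using ((Complex.lt_def.mp (hβpos i)).2).symm
    rw [hconj B β heigB, hre]
    simp

lemma conjd_mul (U : Matrix (Fin d) (Fin d) ℂ) (hU : Uᴴ * U = 1) (v w : Fin d → ℂ) :
    (U * Matrix.diagonal v * Uᴴ) * (U * Matrix.diagonal w * Uᴴ)
      = U * Matrix.diagonal (fun i => v i * w i) * Uᴴ := by
  have := map_mul (conjAlgHom U hU) (Matrix.diagonal v) (Matrix.diagonal w)
  simp only [conjAlgHom_apply] at this
  rw [← this, diagonal_mul_diagonal]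

lemma conj_trace_re (U : Matrix (Fin d) (Fin d) ℂ) (hU : Uᴴ * U = 1) (c : Fin d → ℝ) :
    (U * Matrix.diagonal (fun i => (c i : ℂ)) * Uᴴ).trace.re = ∑ i, c i := by
  rw [Matrix.trace_mul_cycle, hU, one_mul, Matrix.trace_diagonal]
  push_cast
  simp

lemma conjd_sub (U : Matrix (Fin d) (Fin d) ℂ) (v w : Fin d → ℂ) :
    (U * Matrix.diagonal v * Uᴴ) - (U * Matrix.diagonal w * Uᴴ)
      = U * Matrix.diagonal (fun i => v i - w i) * Uᴴ := by
  rw [← diagonal_sub, Matrix.mul_sub, Matrix.sub_mul]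

end Aux

theorem commuting_exponents_eq_KL {d : ℕ}
    (A B : Matrix (Fin d) (Fin d) ℂ)
    (hA : IsDensity A) (hB : IsDensity B)
    (hApd : A.PosDef) (hBpd : B.PosDef) (hcomm : A * B = B * A)
    (s : ℝ) (hs : s ∈ Set.Ioo (0 : ℝ) 1)
    (T : ℝ) (hT : T = (mpow A (1 - s) * mpow B s).trace.re)
    (Vs : Matrix (Fin d) (Fin d) ℂ)
    (hVs : Vs = ((T : ℂ)⁻¹) • (mpow A (1 - s) * mpow B s))
    (μs μ's : ℝ) (hμ : μs = Real.log T)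
    (hμ' : μ's = ((mpow A (1 - s) * mpow B s) * (mlog B - mlog A)).trace.re / T) :
    -μs + s * μ's = relEnt Vs A ∧ -μs - (1 - s) * μ's = relEnt Vs B := by
  classical
  rcases Nat.eq_zero_or_pos d with hd | hd
  · subst hd
    have htr : ∀ (M : Matrix (Fin 0) (Fin 0) ℂ), M.trace = 0 := by
      intro M; simp [Matrix.trace]
    rw [htr] at hT
    simp only [Complex.zero_re] at hT
    subst hT
    rw [htr] at hμ'
    simp only [Complex.zero_re, zero_div] at hμ'
    rw [Real.log_zero] at hμ
    subst hμ; subst hμ'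
    constructor <;> simp [relEnt, htr]
  · obtain ⟨U, a, b, hU, ha, hb, hAeq, hBeq⟩ := posdef_joint_diag A B hApd hBpd hcomm
    have hs0 : 0 < s := hs.1
    have hs1 : s < 1 := hs.2
    obtain ⟨c, hc⟩ : ∃ c : Fin d → ℝ, c = fun i => a i ^ (1 - s) * b i ^ s := ⟨_, rfl⟩
    have hcpos : ∀ i, 0 < c i := fun i => by
      rw [hc]
      exact mul_pos (Real.rpow_pos_of_pos (ha i) _) (Real.rpow_pos_of_pos (hb i) _)
    have hmpA : mpow A (1 - s) = U * Matrix.diagonal (fun i => ((a i ^ (1 - s) : ℝ) : ℂ)) * Uᴴ := by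
      rw [mpow, hAeq]; exact cfc_conj_diag U hU a _
    have hmpB : mpow B s = U * Matrix.diagonal (fun i => ((b i ^ s : ℝ) : ℂ)) * Uᴴ := by
      rw [mpow, hBeq]; exact cfc_conj_diag U hU b _
    have hM : mpow A (1 - s) * mpow B s = U * Matrix.diagonal (fun i => ((c i : ℝ) : ℂ)) * Uᴴ := by
      rw [hmpA, hmpB, conjd_mul U hU]
      congr 2
      funext i
      rw [hc]
      push_cast
      rfl
    have hTval : T = ∑ i, c i := by rw [hT, hM, conj_trace_re U hU]
    have hTpos : 0 < T := by
      rw [hTval]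
      exact Finset.sum_pos (fun i _ => hcpos i) (Finset.univ_nonempty_iff.mpr
        (Fin.pos_iff_nonempty.mp hd))
    have hTne : T ≠ 0 := ne_of_gt hTpos
    obtain ⟨v, hv⟩ : ∃ v : Fin d → ℝ, v = fun i => T⁻¹ * c i := ⟨_, rfl⟩
    have hvpos : ∀ i, 0 < v i := fun i => by
      rw [hv]; exact mul_pos (inv_pos.mpr hTpos) (hcpos i)
    have hsmul : (T : ℂ)⁻¹ • (U * Matrix.diagonal (fun i => ((c i : ℝ) : ℂ)) * Uᴴ)
        = U * Matrix.diagonal (fun i => ((v i : ℝ) : ℂ)) * Uᴴ := by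
      rw [← Matrix.smul_mul]
      congr 1
      rw [← Matrix.mul_smul]
      congr 1
      ext i j
      by_cases h : i = j
      · subst h
        simp only [Matrix.smul_apply, Matrix.diagonal_apply_eq, smul_eq_mul, hv]
        push_cast
        ring
      · simp [Matrix.diagonal_apply_ne _ h, h]
    have hVseq : Vs = U * Matrix.diagonal (fun i => ((v i : ℝ) : ℂ)) * Uᴴ := by
      rw [hVs, hM, hsmul]
    have hlogVs : mlog Vs = U * Matrix.diagonal (fun i => ((Real.log (v i) : ℝ) : ℂ)) * Uᴴ := by
      rw [mlog, hVseq]; exact cfc_conj_diag U hU v _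
    have hlogA : mlog A = U * Matrix.diagonal (fun i => ((Real.log (a i) : ℝ) : ℂ)) * Uᴴ := by
      rw [mlog, hAeq]; exact cfc_conj_diag U hU a _
    have hlogB : mlog B = U * Matrix.diagonal (fun i => ((Real.log (b i) : ℝ) : ℂ)) * Uᴴ := by
      rw [mlog, hBeq]; exact cfc_conj_diag U hU b _
    have key : ∀ (x w₁ w₂ : Fin d → ℝ),
        ((U * Matrix.diagonal (fun i => ((x i : ℝ) : ℂ)) * Uᴴ) *
          ((U * Matrix.diagonal (fun i => ((w₁ i : ℝ) : ℂ)) * Uᴴ) -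
           (U * Matrix.diagonal (fun i => ((w₂ i : ℝ) : ℂ)) * Uᴴ))).trace.re
          = ∑ i, x i * (w₁ i - w₂ i) := by
      intro x w₁ w₂
      rw [conjd_sub, conjd_mul U hU]
      have h : (fun i => ((x i : ℝ) : ℂ) * (((w₁ i : ℝ) : ℂ) - ((w₂ i : ℝ) : ℂ)))
          = fun i => (((x i * (w₁ i - w₂ i) : ℝ)) : ℂ) := by
        funext i; push_cast; ring
      rw [h, conj_trace_re U hU]
    have hμ'val : μ's = (∑ i, c i * (Real.log (b i) - Real.log (a i))) / T := by
      rw [hμ', hM, hlogB, hlogA, key]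
    have hEntA : relEnt Vs A = ∑ i, v i * (Real.log (v i) - Real.log (a i)) := by
      rw [relEnt, hlogVs, hlogA, hVseq, key]
    have hEntB : relEnt Vs B = ∑ i, v i * (Real.log (v i) - Real.log (b i)) := by
      rw [relEnt, hlogVs, hlogB, hVseq, key]
    have hlogv : ∀ i, Real.log (v i) = -Real.log T + ((1 - s) * Real.log (a i)
        + s * Real.log (b i)) := by
      intro i
      rw [hv]
      simp only []
      rw [Real.log_mul (inv_ne_zero hTne) (ne_of_gt (hcpos i)), Real.log_inv, hc]
      simp only []
      rw [Real.log_mul (ne_of_gt (Real.rpow_pos_of_pos (ha i) _))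
          (ne_of_gt (Real.rpow_pos_of_pos (hb i) _)),
        Real.log_rpow (ha i), Real.log_rpow (hb i)]
    have hsumv : (∑ i, v i) = 1 := by
      simp only [hv]
      rw [← Finset.mul_sum, ← hTval, inv_mul_cancel₀ hTne]
    have hsum2 : (∑ i, v i * (Real.log (b i) - Real.log (a i))) = μ's := by
      rw [hμ'val, div_eq_inv_mul, Finset.mul_sum]
      apply Finset.sum_congr rfl
      intro i _
      rw [hv]
      ring
    constructor
    · rw [hEntA]
      have expand : (∑ i, v i * (Real.log (v i) - Real.log (a i)))
          = (∑ i, -Real.log T * v i)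
            + ∑ i, s * (v i * (Real.log (b i) - Real.log (a i))) := by
        rw [← Finset.sum_add_distrib]
        apply Finset.sum_congr rfl
        intro i _
        rw [hlogv i]; ring
      have e1 : (∑ i, -Real.log T * v i) = -Real.log T := by
        rw [← Finset.mul_sum, hsumv, mul_one]
      have e2 : (∑ i, s * (v i * (Real.log (b i) - Real.log (a i)))) = s * μ's := by
        rw [← Finset.mul_sum, hsum2]
      rw [expand, e1, e2, hμ]
    · rw [hEntB]
      have expand : (∑ i, v i * (Real.log (v i) - Real.log (b i)))
          = (∑ i, -Real.log T * v i)
            - ∑ i, (1 - s) * (v i * (Real.log (b i) - Real.log (a i))) := by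
        rw [← Finset.sum_sub_distrib]
        apply Finset.sum_congr rfl
        intro i _
        rw [hlogv i]; ring
      have e1 : (∑ i, -Real.log T * v i) = -Real.log T := by
        rw [← Finset.mul_sum, hsumv, mul_one]
      have e2 : (∑ i, (1 - s) * (v i * (Real.log (b i) - Real.log (a i)))) = (1 - s) * μ's := by
        rw [← Finset.mul_sum, hsum2]
      rw [expand, e1, e2, hμ]
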